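/- Let κ be an uncountable regular cardinal and let δ < κ be an ordinal such that there exists an injection from κ into the set of functions from δ to 2. Then there exists a function c from the 2-element subsets of κ to 2 such that no c-homogeneous subset of κ is unbounded in κ. -/
import Mathlib

open Classical in
/-- Lexicographic "less than" below `δ` for two functions `Ordinal → Fin 2`. -/
def stmt7lex (δ : Ordinal) (f g : Ordinal → Fin 2) : Prop :=
  ∃ γ, γ < δ ∧ (∀ γ' < γ, f γ' = g γ') ∧ f γ = 0 ∧ g γ = 1

lemma stmt7lex_asymm {δ : Ordinal} {f g : Ordinal → Fin 2}
    (h1 : stmt7lex δ f g) (h2 : stmt7lex δ g f) : False := by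
  obtain ⟨γ1, _, ha1, hb1, hc1⟩ := h1
  obtain ⟨γ2, _, ha2, hb2, hc2⟩ := h2
  rcases lt_trichotomy γ1 γ2 with h | h | h
  · have := ha2 γ1 h; rw [hb1, hc1] at this; exact absurd this (by decide)
  · subst h; rw [hb1] at hc2; exact absurd hc2 (by decide)
  · have := ha1 γ2 h; rw [hb2, hc2] at this; exact absurd this (by decide)

/-- Totality: two functions differing somewhere below `δ` are lex-comparable. -/
lemma fin2_ne_cases : ∀ {a b : Fin 2}, a ≠ b → (a = 0 ∧ b = 1) ∨ (b = 0 ∧ a = 1) := by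
  decide

lemma stmt7lex_total {δ : Ordinal} {f g : Ordinal → Fin 2}
    (h : ∃ γ < δ, f γ ≠ g γ) : stmt7lex δ f g ∨ stmt7lex δ g f := by
  classical
  set A : Set Ordinal := {γ | γ < δ ∧ f γ ≠ g γ} with hA
  have hne : A.Nonempty := by obtain ⟨γ, h1, h2⟩ := h; exact ⟨γ, h1, h2⟩
  have hmem : sInf A ∈ A := csInf_mem hne
  obtain ⟨hlt, hne'⟩ := hmem
  have hagree : ∀ γ' < sInf A, f γ' = g γ' := by
    intro γ' hγ'
    by_contra hcon
    have hmem' : γ' ∈ A := ⟨hγ'.trans hlt, hcon⟩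
    have := csInf_le' hmem'
    exact absurd hγ' (not_lt.2 this)
  rcases fin2_ne_cases hne' with ⟨h1, h2⟩ | ⟨h1, h2⟩
  · exact Or.inl ⟨sInf A, hlt, hagree, h1, h2⟩
  · exact Or.inr ⟨sInf A, hlt, fun γ' h => (hagree γ' h).symm, h1, h2⟩

/-- Main combinatorial lemma: there is no lex-increasing family along an
unbounded subset of `κ.ord`, for any `δ < κ.ord`. -/
lemma stmt7main (κ : Cardinal) (hreg : κ.IsRegular) :
    ∀ δ : Ordinal, δ < κ.ord →
    ∀ f : Ordinal → Ordinal → Fin 2, ∀ S : Set Ordinal,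
      S ⊆ Set.Iio κ.ord →
      (∀ γ < κ.ord, ∃ α ∈ S, γ ≤ α) →
      (∀ α ∈ S, ∀ β ∈ S, α < β → stmt7lex δ (f α) (f β)) → False := by
  intro δ
  induction δ using Ordinal.induction with
  | h δ IH =>
  intro hδ f S hSsub hSub hmono
  classical
  -- every element of S has a successor in S
  have hnext : ∀ α ∈ S, ∃ β, β ∈ S ∧ α < β := by
    intro α hα
    have h1 : Order.succ α < κ.ord := (Cardinal.isSuccLimit_ord hreg.aleph0_le).succ_lt (hSsub hα)
    obtain ⟨β, hβ, hle⟩ := hSub _ h1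
    exact ⟨β, hβ, (Order.lt_succ α).trans_le hle⟩
  -- the least element of S above α
  set nxt : Ordinal → Ordinal := fun α => sInf {β | β ∈ S ∧ α < β} with hnxt
  have hnxtmem : ∀ α ∈ S, nxt α ∈ S ∧ α < nxt α := by
    intro α hα
    exact csInf_mem (hnext α hα)
  have hnxtle : ∀ α β, β ∈ S → α < β → nxt α ≤ β := by
    intro α β hβ hαβ
    exact csInf_le' ⟨hβ, hαβ⟩
  -- first difference between f α and f (nxt α)
  have key : ∀ α, ∃ γ, α ∈ S → γ < δ ∧ (∀ γ' < γ, f α γ' = f (nxt α) γ') ∧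
      f α γ = 0 ∧ f (nxt α) γ = 1 := by
    intro α
    by_cases hα : α ∈ S
    · obtain ⟨hmem, hlt⟩ := hnxtmem α hα
      obtain ⟨γ, h1, h2, h3⟩ := hmono α hα (nxt α) hmem hlt
      exact ⟨γ, fun _ => ⟨h1, h2, h3⟩⟩
    · exact ⟨0, fun h => absurd h hα⟩
  choose γfun hγfun using key
  -- find a fiber of γfun which is unbounded
  have hfib : ∃ γ < δ, ∀ β < κ.ord, ∃ α, (α ∈ S ∧ γfun α = γ) ∧ β ≤ α := by
    by_contra hcon
    push_neg at hcon
    -- each fiber is bounded; choose bounds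
    choose b hb1 hb2 using hcon
    set B := Ordinal.bsup δ b with hB
    have hBlt : B < κ.ord := by
      refine Cardinal.bsup_lt_ord_of_isRegular hreg (Cardinal.lt_ord.1 hδ) hb1
    obtain ⟨α, hα, hle⟩ := hSub B hBlt
    have h1 : γfun α < δ := (hγfun α hα).1
    have h2 := hb2 _ h1 α ⟨hα, rfl⟩
    have h3 : b (γfun α) h1 ≤ B := Ordinal.le_bsup b _ h1
    exact absurd hle (not_le.2 (h2.trans_le h3))
  obtain ⟨γ, hγδ, hT⟩ := hfib
  set T : Set Ordinal := {α | α ∈ S ∧ γfun α = γ} with hTdef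
  -- T is lex-increasing with respect to γ
  have hTmono : ∀ α ∈ T, ∀ β ∈ T, α < β → stmt7lex γ (f α) (f β) := by
    rintro α ⟨hαS, hαγ⟩ β ⟨hβS, hβγ⟩ hαβ
    obtain ⟨_, hagA, hA0, hA1⟩ := hγfun α hαS
    obtain ⟨_, hagB, hB0, hB1⟩ := hγfun β hβS
    rw [hαγ] at hagA hA0 hA1
    rw [hβγ] at hagB hB0 hB1
    obtain ⟨γ', hγ'δ, hag, h0, h1⟩ := hmono α hαS β hβS hαβ
    have hγ'γ : γ' < γ := by
      by_contra hcon
      rcases eq_or_lt_of_le (not_lt.1 hcon) with heq | hlt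
      · rw [heq] at hB0; rw [hB0] at h1; exact absurd h1 (by decide)
      · -- γ < γ' : f β agrees with f α below γ', in particular f β γ = f α γ = 0
        have hβα : ∀ x < γ, f β x = f α x := fun x hx => (hag x (hx.trans hlt)).symm
        have hβγ0 : f β γ = f α γ := (hag γ hlt).symm
        -- then f β <lex f (nxt α), but nxt α ≤ β
        have hnle : nxt α ≤ β := hnxtle α β hβS hαβ
        rcases eq_or_lt_of_le hnle with heq | hlt2
        · rw [heq] at hA1; rw [hβγ0, hA0] at hA1; exact absurd hA1 (by decide)
        · obtain ⟨γ'', hγ''δ, hag2, h02, h12⟩ :=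
            hmono (nxt α) (hnxtmem α hαS).1 β hβS hlt2
          rcases lt_trichotomy γ'' γ with hc | hc | hc
          · have e1 : f (nxt α) γ'' = f α γ'' := (hagA γ'' hc).symm
            have e2 : f β γ'' = f α γ'' := hβα γ'' hc
            rw [e1] at h02
            rw [e2] at h12
            rw [h02] at h12; exact absurd h12 (by decide)
          · rw [hc] at h02; rw [h02] at hA1; exact absurd hA1 (by decide)
          · have := hag2 γ hc; rw [hA1, hβγ0, hA0] at this
            exact absurd this (by decide)
    exact ⟨γ', hγ'γ, hag, h0, h1⟩
  exact IH γ hγδ (hγδ.trans hδ) f T (fun α hα => hSsub hα.1) hT hTmono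

open Classical in
/-- Let `κ` be an uncountable regular cardinal and `δ < κ` an
ordinal such that there is an injection from `κ` into the set of functions
`δ → 2`.  Then there is a colouring `c` of the `2`-element subsets of `κ` with
values in `2` such that no `c`-homogeneous subset of `κ` is unbounded in `κ`.

Here ordinals below `κ.ord` represent elements of `κ`, functions `δ → 2` are
represented by functions `Ordinal → Fin 2` (only values below `δ` matter, and
injectivity is injectivity of the restrictions to `δ`). -/
theorem stmt7 (κ : Cardinal) (hreg : κ.IsRegular) (hunc : Cardinal.aleph0 < κ)
    (δ : Ordinal) (hδ : δ < κ.ord)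
    (hex : ∃ ι : Ordinal → Ordinal → Fin 2,
      ∀ α < κ.ord, ∀ β < κ.ord, α ≠ β → ∃ γ < δ, ι α γ ≠ ι β γ) :
    ∃ c : Finset Ordinal → Fin 2, ∀ H : Set Ordinal, H ⊆ Set.Iio κ.ord →
      (∃ i : Fin 2, ∀ α ∈ H, ∀ β ∈ H, α < β → c {α, β} = i) →
      ¬ (∀ γ < κ.ord, ∃ α ∈ H, γ ≤ α) := by
  classical
  obtain ⟨ι, hι⟩ := hex
  refine ⟨fun s => if h : s.Nonempty then
      (if stmt7lex δ (ι (s.min' h)) (ι (s.max' h)) then 1 else 0) else 0, ?_⟩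
  rintro H hH ⟨i, hi⟩ hub
  -- compute the colour of a pair
  have hpair : ∀ α β : Ordinal, α < β →
      (if h : ({α, β} : Finset Ordinal).Nonempty then
        (if stmt7lex δ (ι (({α, β} : Finset Ordinal).min' h))
            (ι (({α, β} : Finset Ordinal).max' h)) then (1 : Fin 2) else 0) else 0)
      = (if stmt7lex δ (ι α) (ι β) then 1 else 0) := by
    intro α β hαβ
    have hne : ({α, β} : Finset Ordinal).Nonempty := ⟨α, by simp⟩
    have hmin : ({α, β} : Finset Ordinal).min' hne = α := by
      apply le_antisymm
      · exact Finset.min'_le _ _ (by simp)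
      · apply Finset.le_min'
        intro y hy
        rcases Finset.mem_insert.1 hy with h | h
        · exact h.ge
        · rw [Finset.mem_singleton.1 h]; exact hαβ.le
    have hmax : ({α, β} : Finset Ordinal).max' hne = β := by
      apply le_antisymm
      · apply Finset.max'_le
        intro y hy
        rcases Finset.mem_insert.1 hy with h | h
        · rw [h]; exact hαβ.le
        · rw [Finset.mem_singleton.1 h]
      · exact Finset.le_max' _ _ (by simp)
    rw [dif_pos hne, hmin, hmax]
  -- define the functions to which we apply the main lemma
  have flip0 : ∀ a b : Fin 2, a ≠ b → a = 0 → b = 1 := by decide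
  have hmono : ∀ g : Ordinal → Ordinal → Fin 2,
      (∀ α ∈ H, ∀ β ∈ H, α < β → stmt7lex δ (g α) (g β)) → False := by
    intro g hg
    exact stmt7main κ hreg δ hδ g H hH hub hg
  have hcomp : ∀ α ∈ H, ∀ β ∈ H, α < β →
      stmt7lex δ (ι α) (ι β) ∨ stmt7lex δ (ι β) (ι α) := by
    intro α hα β hβ hαβ
    refine stmt7lex_total ?_
    obtain ⟨γ, h1, h2⟩ := hι α (hH hα) β (hH hβ) (ne_of_lt hαβ)
    exact ⟨γ, h1, h2⟩
  fin_cases i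
  · -- colour 0 : never lex-increasing, hence lex-decreasing; flip the bits
    apply hmono (fun α γ => if ι α γ = 0 then 1 else 0)
    intro α hα β hβ hαβ
    have h := hi α hα β hβ hαβ
    simp only at h
    rw [hpair α β hαβ] at h
    have hno : ¬ stmt7lex δ (ι α) (ι β) := by
      intro hyes; rw [if_pos hyes] at h; exact absurd h (by decide)
    have hlt : stmt7lex δ (ι β) (ι α) := (hcomp α hα β hβ hαβ).resolve_left hno
    obtain ⟨γ, h1, h2, h3, h4⟩ := hlt
    refine ⟨γ, h1, ?_, ?_, ?_⟩
    · intro γ' hγ'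
      show (if ι α γ' = 0 then (1 : Fin 2) else 0) = (if ι β γ' = 0 then 1 else 0)
      rw [h2 γ' hγ']
    · show (if ι α γ = 0 then (1 : Fin 2) else 0) = 0
      rw [if_neg (by rw [h4]; exact (by decide : (1 : Fin 2) ≠ 0))]
    · show (if ι β γ = 0 then (1 : Fin 2) else 0) = 1
      rw [if_pos h3]
  · -- colour 1 : always lex-increasing
    apply hmono ι
    intro α hα β hβ hαβ
    have h := hi α hα β hβ hαβ
    simp only at h
    rw [hpair α β hαβ] at h
    by_contra hno
    rw [if_neg hno] at h
    exact absurd h (by decide)
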